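/- Let E be a complex Hilbert space, let H be a bounded selfadjoint operator on E, let F be a unitary operator on E, and let r > 2‖H‖. Then the block operator M = [[−H, rF*], [rF, FHF*]] on E ⊕ E is selfadjoint and satisfies M² ≥ (r − 2‖H‖)²·1; in particular M is invertible. -/

import Mathlib

open ContinuousLinearMap in
/-- The block operator `[[A, B], [C, D]]` on the Hilbert space direct sum `E ⊕ F`
(realized as `WithLp 2 (E × F)`), acting by `(x, y) ↦ (A x + B y, C x + D y)`. -/
noncomputable def blockOp {E F : Type*} [NormedAddCommGroup E] [InnerProductSpace ℂ E]
    [NormedAddCommGroup F] [InnerProductSpace ℂ F]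
    (A : E →L[ℂ] E) (B : F →L[ℂ] E) (C : E →L[ℂ] F) (D : F →L[ℂ] F) :
    WithLp 2 (E × F) →L[ℂ] WithLp 2 (E × F) :=
  ((WithLp.prodContinuousLinearEquiv 2 ℂ E F).symm.toContinuousLinearMap.comp
    ((A.comp (fst ℂ E F) + B.comp (snd ℂ E F)).prod
      (C.comp (fst ℂ E F) + D.comp (snd ℂ E F)))).comp
    (WithLp.prodContinuousLinearEquiv 2 ℂ E F).toContinuousLinearMap


section aux
variable {E F : Type*} [NormedAddCommGroup E] [InnerProductSpace ℂ E]
    [NormedAddCommGroup F] [InnerProductSpace ℂ F]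

@[simp] lemma blockOp_fst (A : E →L[ℂ] E) (B : F →L[ℂ] E) (C : E →L[ℂ] F) (D : F →L[ℂ] F)
    (v : WithLp 2 (E × F)) : (blockOp A B C D v).fst = A v.fst + B v.snd := rfl

@[simp] lemma blockOp_snd (A : E →L[ℂ] E) (B : F →L[ℂ] E) (C : E →L[ℂ] F) (D : F →L[ℂ] F)
    (v : WithLp 2 (E × F)) : (blockOp A B C D v).snd = C v.fst + D v.snd := rfl

lemma blockOp_adjoint [CompleteSpace E] [CompleteSpace F]
    (A : E →L[ℂ] E) (B : F →L[ℂ] E) (C : E →L[ℂ] F) (D : F →L[ℂ] F) :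
    ContinuousLinearMap.adjoint (blockOp A B C D) =
      blockOp (ContinuousLinearMap.adjoint A) (ContinuousLinearMap.adjoint C)
        (ContinuousLinearMap.adjoint B) (ContinuousLinearMap.adjoint D) := by
  symm
  rw [ContinuousLinearMap.eq_adjoint_iff]
  intro x y
  simp [inner_add_left, inner_add_right, ContinuousLinearMap.adjoint_inner_left]
  ring

end aux


open scoped ComplexInnerProductSpace in
set_option maxHeartbeats 1000000 in
/-- For `H` bounded selfadjoint, `F` unitary and `r > 2‖H‖`, the block operator
`M = [[−H, rF*], [rF, FHF*]]` is selfadjoint and satisfies `M² ≥ (r − 2‖H‖)²·1`; in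
particular `M` is invertible. -/
theorem dirac_phase_gap {E : Type*} [NormedAddCommGroup E] [InnerProductSpace ℂ E]
    [CompleteSpace E] (H F : E →L[ℂ] E) (hH : IsSelfAdjoint H)
    (hF : F ∈ unitary (E →L[ℂ] E)) (r : ℝ) (hr : 2 * ‖H‖ < r) :
    IsSelfAdjoint (blockOp (-H) ((r : ℂ) • ContinuousLinearMap.adjoint F) ((r : ℂ) • F)
        (F * H * ContinuousLinearMap.adjoint F)) ∧
    (((r - 2 * ‖H‖) ^ 2 : ℝ) : ℂ) • (1 : WithLp 2 (E × E) →L[ℂ] WithLp 2 (E × E)) ≤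
      (blockOp (-H) ((r : ℂ) • ContinuousLinearMap.adjoint F) ((r : ℂ) • F)
        (F * H * ContinuousLinearMap.adjoint F)) ^ 2 ∧
    IsUnit (blockOp (-H) ((r : ℂ) • ContinuousLinearMap.adjoint F) ((r : ℂ) • F)
        (F * H * ContinuousLinearMap.adjoint F)) := by
  have hH0 : (0:ℝ) ≤ ‖H‖ := norm_nonneg H
  have hr0 : 0 < r := lt_of_le_of_lt (by positivity) hr
  set F' := ContinuousLinearMap.adjoint F with hF'
  set M := blockOp (-H) ((r : ℂ) • F') ((r : ℂ) • F) (F * H * F') with hMdef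
  have hFF' : F * F' = 1 := by
    rw [hF', ← ContinuousLinearMap.star_eq_adjoint]
    exact (Unitary.mem_iff.mp hF).2
  have hF'F : F' * F = 1 := by
    rw [hF', ← ContinuousLinearMap.star_eq_adjoint]
    exact (Unitary.mem_iff.mp hF).1
  -- isometry facts
  have hFiso : ∀ x : E, ‖F x‖ = ‖x‖ := by
    intro x
    have h1 : F' (F x) = x := by
      have := congrArg (fun T => T x) hF'F
      simpa using this
    have h2 : ⟪F x, F x⟫ = ⟪x, x⟫ := by
      rw [← ContinuousLinearMap.adjoint_inner_left F x (F x), ← hF', h1]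
    have e := congrArg (RCLike.re (K := ℂ)) h2
    rw [inner_self_eq_norm_sq, inner_self_eq_norm_sq] at e
    nlinarith [norm_nonneg (F x), norm_nonneg x]
  have hF'iso : ∀ x : E, ‖F' x‖ = ‖x‖ := by
    intro x
    have h1 : F (F' x) = x := by
      have := congrArg (fun T => T x) hFF'
      simpa using this
    conv_rhs => rw [← h1]
    rw [hFiso]
  -- selfadjointness
  have hsym : ∀ a b : E, ⟪H a, b⟫ = ⟪a, H b⟫ := fun a b =>
    (ContinuousLinearMap.isSelfAdjoint_iff_isSymmetric.mp hH) a b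
  have hM : IsSelfAdjoint M := by
    rw [ContinuousLinearMap.isSelfAdjoint_iff', hMdef, blockOp_adjoint]
    have e1 : ContinuousLinearMap.adjoint (-H) = -H := by
      rw [← ContinuousLinearMap.star_eq_adjoint]; exact hH.neg.star_eq
    have e2 : ContinuousLinearMap.adjoint ((r:ℂ) • F) = (r:ℂ) • F' := by
      rw [← ContinuousLinearMap.star_eq_adjoint, star_smul, hF',
        ← ContinuousLinearMap.star_eq_adjoint]
      simp [Complex.conj_ofReal]
    have e3 : ContinuousLinearMap.adjoint ((r:ℂ) • F') = (r:ℂ) • F := by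
      rw [← ContinuousLinearMap.star_eq_adjoint, star_smul, hF',
        ← ContinuousLinearMap.star_eq_adjoint, star_star]
      simp [Complex.conj_ofReal]
    have e4 : ContinuousLinearMap.adjoint (F * H * F') = F * H * F' := by
      rw [← ContinuousLinearMap.star_eq_adjoint, hF', ← ContinuousLinearMap.star_eq_adjoint]
      simp [star_mul, star_star, hH.star_eq, mul_assoc]
    rw [e1, e2, e3, e4]
  -- the key norm estimate
  have key : ∀ v : WithLp 2 (E × E), r ^ 2 * ‖v‖ ^ 2 ≤ ‖M v‖ ^ 2 := by
    intro v
    set a := v.fst with ha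
    set b := F' v.snd with hb
    have hfst : (M v).fst = -(H a) + (r:ℂ) • b := by
      simp [hMdef, ha, hb]
    have hsnd : (M v).snd = F ((r:ℂ) • a + H b) := by
      simp [hMdef, ha, hb, map_add]
      try rfl
    have hnv : ‖v‖ ^ 2 = ‖a‖ ^ 2 + ‖b‖ ^ 2 := by
      rw [WithLp.prod_norm_sq_eq_of_L2, hb, hF'iso]
    have hnMv : ‖M v‖ ^ 2 = ‖-(H a) + (r:ℂ) • b‖ ^ 2 + ‖(r:ℂ) • a + H b‖ ^ 2 := by
      rw [WithLp.prod_norm_sq_eq_of_L2, hfst, hsnd, hFiso]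
    have c1 : ⟪-(H a), (r:ℂ) • b⟫ = -((r:ℂ) * ⟪H a, b⟫) := by
      rw [inner_neg_left, inner_smul_right]
    have c2 : ⟪(r:ℂ) • a, H b⟫ = (r:ℂ) * ⟪H a, b⟫ := by
      rw [inner_smul_left, Complex.conj_ofReal, hsym a b]
    have nr : ‖((r:ℂ))‖ = r := by
      rw [Complex.norm_real, Real.norm_eq_abs, abs_of_pos hr0]
    have n1 : ‖-(H a) + (r:ℂ) • b‖ ^ 2
        = ‖H a‖ ^ 2 - 2 * (r * Complex.re ⟪H a, b⟫) + r ^ 2 * ‖b‖ ^ 2 := by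
      rw [norm_add_sq (𝕜 := ℂ), c1, norm_neg, norm_smul, nr]
      simp only [map_neg, Complex.re_ofReal_mul, RCLike.re_to_complex]
      try ring
    have n2 : ‖(r:ℂ) • a + H b‖ ^ 2
        = r ^ 2 * ‖a‖ ^ 2 + 2 * (r * Complex.re ⟪H a, b⟫) + ‖H b‖ ^ 2 := by
      rw [norm_add_sq (𝕜 := ℂ), c2, norm_smul, nr]
      simp only [Complex.re_ofReal_mul, RCLike.re_to_complex]
      try ring
    rw [hnv, hnMv, n1, n2]
    nlinarith [sq_nonneg ‖H a‖, sq_nonneg ‖H b‖]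
  refine ⟨hM, ?_, ?_⟩
  · -- the operator inequality
    rw [ContinuousLinearMap.le_def]
    constructor
    · have h1 : IsSelfAdjoint ((((r - 2 * ‖H‖) ^ 2 : ℝ) : ℂ) •
          (1 : WithLp 2 (E × E) →L[ℂ] WithLp 2 (E × E))) := by
        rw [IsSelfAdjoint, star_smul]
        simp [Complex.conj_ofReal]
      exact ContinuousLinearMap.isSelfAdjoint_iff_isSymmetric.mp ((hM.pow 2).sub h1)
    · intro x
      have hMsym := ContinuousLinearMap.isSelfAdjoint_iff_isSymmetric.mp hM
      rw [ContinuousLinearMap.reApplyInnerSelf_apply]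
      have h2 : ⟪(M ^ 2) x, x⟫ = ((‖M x‖ : ℂ)) ^ 2 := by
        rw [pow_two, ContinuousLinearMap.mul_apply]
        rw [show ⟪M (M x), x⟫ = ⟪M x, M x⟫ from hMsym (M x) x]
        exact inner_self_eq_norm_sq_to_K (M x)
      rw [ContinuousLinearMap.sub_apply, ContinuousLinearMap.smul_apply,
        ContinuousLinearMap.one_apply, inner_sub_left, inner_smul_left, h2,
        inner_self_eq_norm_sq_to_K]
      simp only [show (RCLike.ofReal : ℝ → ℂ) = Complex.ofReal from rfl, Complex.conj_ofReal,
        ← Complex.ofReal_pow, ← Complex.ofReal_mul, ← Complex.ofReal_sub]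
      have hre : RCLike.re (Complex.ofReal (‖M x‖ ^ 2 - (r - 2 * ‖H‖) ^ 2 * ‖x‖ ^ 2))
          = ‖M x‖ ^ 2 - (r - 2 * ‖H‖) ^ 2 * ‖x‖ ^ 2 := RCLike.ofReal_re _
      rw [hre]
      have hd : 0 ≤ (r ^ 2 - (r - 2 * ‖H‖) ^ 2) * ‖x‖ ^ 2 :=
        mul_nonneg (by nlinarith) (sq_nonneg _)
      nlinarith [key x, hd]
  · -- invertibility
    have hM2 : IsUnit (M ^ 2) := by
      refine ContinuousLinearMap.isUnit_of_forall_le_norm_inner_map (M ^ 2)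
        (c := NNReal.mk (r ^ 2) (by positivity)) ?_ ?_
      · rw [← NNReal.coe_pos]
        exact pow_pos hr0 2
      · intro x
        have hMsym := ContinuousLinearMap.isSelfAdjoint_iff_isSymmetric.mp hM
        have hx : (M ^ 2) x = M (M x) := by simp [pow_two, ContinuousLinearMap.mul_apply]
        have h2 : ⟪M (M x), x⟫ = ⟪M x, M x⟫ := hMsym (M x) x
        rw [hx, h2, inner_self_eq_norm_sq_to_K]
        simp only [NNReal.coe_mk]
        rw [← RCLike.ofReal_pow, RCLike.norm_ofReal, abs_of_nonneg (by positivity)]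
        nlinarith [key x]
    exact (isUnit_pow_iff two_ne_zero).mp hM2
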